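/- arXiv:2311.15825 — 2 statements merged into one kernel-verified Lean document; each statement's English description precedes it below -/
import Mathlib

section
/- Let G be a discrete subgroup of O(n) × Isom(ℝ) acting freely on S^{n−1} × ℝ with compact quotient. Then the image of G under projection to Isom(ℝ) is an infinite discrete subgroup of Isom(ℝ), hence is infinite cyclic or infinite dihedral. -/
namespace Stmt8Aux

/-- Translation isometry. -/
noncomputable def T (c : ℝ) : ℝ ≃ᵢ ℝ := IsometryEquiv.addRight c

@[simp] lemma T_apply (c x : ℝ) : T c x = x + c := rfl

/-- Every isometry of ℝ is affine: `f x = f 0 + (f 1 - f 0) * x`. -/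
lemma isom_affine (f : ℝ ≃ᵢ ℝ) (x : ℝ) : f x = f 0 + (f 1 - f 0) * x := by
  have h0 : |f x - f 0| = |x| := by
    have := f.dist_eq x 0; simpa [Real.dist_eq] using this
  have h1 : |f x - f 1| = |x - 1| := by
    have := f.dist_eq x 1; simpa [Real.dist_eq] using this
  have h2 : |f 1 - f 0| = |1 - (0:ℝ)| := by
    have := f.dist_eq 1 0; simpa [Real.dist_eq] using this
  have q0 : (f x - f 0)^2 = x^2 := by rw [← sq_abs, h0, sq_abs]
  have q1 : (f x - f 1)^2 = (x - 1)^2 := by rw [← sq_abs, h1, sq_abs]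
  have q2 : (f 1 - f 0)^2 = 1 := by rw [← sq_abs, h2]; norm_num
  nlinarith [q0, q1, q2]

lemma ee_cases (f : ℝ ≃ᵢ ℝ) : f 1 - f 0 = 1 ∨ f 1 - f 0 = -1 := by
  have h2 : |f 1 - f 0| = 1 := by
    have := f.dist_eq 1 0; simpa [Real.dist_eq] using this
  rcases (abs_eq (by norm_num : (0:ℝ) ≤ 1)).1 h2 with h | h
  · exact Or.inl h
  · exact Or.inr h

lemma ee_mul (f g : ℝ ≃ᵢ ℝ) :
    (f * g) 1 - (f * g) 0 = (f 1 - f 0) * (g 1 - g 0) := by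
  have h1 : (f * g) 1 = f (g 1) := rfl
  have h0 : (f * g) 0 = f (g 0) := rfl
  rw [h1, h0, isom_affine f (g 1), isom_affine f (g 0)]
  ring

lemma ee_inv (f : ℝ ≃ᵢ ℝ) : f⁻¹ 1 - f⁻¹ 0 = f 1 - f 0 := by
  have h := ee_mul f f⁻¹
  rw [mul_inv_cancel] at h
  have h1 : (1 : ℝ ≃ᵢ ℝ) 1 = 1 := rfl
  have h0 : (1 : ℝ ≃ᵢ ℝ) 0 = 0 := rfl
  rw [h1, h0] at h
  rcases ee_cases f with hf | hf <;> rcases ee_cases f⁻¹ with hg | hg <;>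
    rw [hf, hg] at h ⊢ <;> linarith

lemma trans_of_ee_one (f : ℝ ≃ᵢ ℝ) (h : f 1 - f 0 = 1) : f = T (f 0) := by
  apply IsometryEquiv.ext
  intro x
  rw [isom_affine f x, h, T_apply]
  ring

lemma T_zero : T 0 = 1 := by
  apply IsometryEquiv.ext; intro x
  show x + 0 = x
  ring

lemma T_add (c d : ℝ) : T (c + d) = T c * T d := by
  apply IsometryEquiv.ext; intro x
  have : (T c * T d) x = T c (T d x) := rfl
  rw [this]
  show x + (c + d) = x + d + c
  ring

/-- `ZMod 0` is definitionally `ℤ`. -/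
def zi (i : ZMod 0) : ℤ := i

lemma zmod0_add (i j : ZMod 0) : zi (i + j) = zi i + zi j := rfl
lemma zmod0_sub (i j : ZMod 0) : zi (i - j) = zi i - zi j := rfl
lemma zi_intCast (k : ℤ) : zi (k : ZMod 0) = k := rfl

@[simp] lemma mul_apply (f g : ℝ ≃ᵢ ℝ) (x : ℝ) : (f * g) x = f (g x) := rfl

/-- The candidate infinite dihedral subgroup: `r i` maps to translation by `i*a`,
`sr i` to the reflection `g` composed with that translation. -/
noncomputable def dih (g : ℝ ≃ᵢ ℝ) (a : ℝ) : DihedralGroup 0 → (ℝ ≃ᵢ ℝ)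
  | .r i => T ((zi i : ℝ) * a)
  | .sr i => g * T ((zi i : ℝ) * a)

lemma dih_mul (g : ℝ ≃ᵢ ℝ) (a b : ℝ) (hg : ∀ x, g x = b - x)
    (d e : DihedralGroup 0) : dih g a (d * e) = dih g a d * dih g a e := by
  rcases d with i | i <;> rcases e with j | j <;>
    apply IsometryEquiv.ext <;> intro x <;>
    simp only [DihedralGroup.r_mul_r, DihedralGroup.r_mul_sr, DihedralGroup.sr_mul_r,
      DihedralGroup.sr_mul_sr, dih, mul_apply, T_apply, hg, zmod0_add, zmod0_sub,
      Int.cast_add, Int.cast_sub] <;> ring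

/-- Classification of infinite discrete subgroups of `Isom ℝ`. -/
lemma key (H : Subgroup (ℝ ≃ᵢ ℝ)) (hd : {h : H | |(h : ℝ ≃ᵢ ℝ) 0| ≤ 1}.Finite)
    (hinf : Infinite H) :
    Nonempty (H ≃* Multiplicative ℤ) ∨ Nonempty (H ≃* DihedralGroup 0) := by
  classical
  -- the subgroup of translation amounts
  set A : AddSubgroup ℝ :=
    { carrier := {c : ℝ | T c ∈ H}
      add_mem' := by
        intro c d hc hd'
        have : T (c + d) = T c * T d := T_add c d
        simp only [Set.mem_setOf_eq] at *
        rw [this]; exact mul_mem hc hd'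
      zero_mem' := by simp only [Set.mem_setOf_eq]; rw [T_zero]; exact one_mem H
      neg_mem' := by
        intro c hc
        simp only [Set.mem_setOf_eq] at *
        have h2 : T (-c) = (T c)⁻¹ := by
          apply eq_inv_of_mul_eq_one_left
          rw [← T_add]
          simpa using T_zero
        rw [h2]; exact inv_mem hc } with hA
  have memA : ∀ c : ℝ, c ∈ A ↔ T c ∈ H := fun c => Iff.rfl
  -- finiteness of translation amounts in [-1,1]
  have hA1 : {c : ℝ | c ∈ A ∧ |c| ≤ 1}.Finite := by
    have himg := hd.image (fun h : H => (h : ℝ ≃ᵢ ℝ) 0)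
    apply himg.subset
    rintro c ⟨hcA, hc1⟩
    refine ⟨⟨T c, (memA c).1 hcA⟩, ?_, ?_⟩
    · show |T c 0| ≤ 1
      simpa [T_apply] using hc1
    · show T c 0 = c
      simp [T_apply]
  -- A is not dense
  have hnotdense : ¬ Dense (A : Set ℝ) := by
    intro hdense
    have hex : ∀ n : ℕ, ∃ c : ℝ, c ∈ (A : Set ℝ) ∧
        c ∈ Set.Ioo (1/(n+2) : ℝ) (1/(n+1)) := fun n =>
      hdense.exists_between (by
        apply one_div_lt_one_div_of_lt
        · positivity
        · push_cast; linarith)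
    choose c hcA hc using hex
    have hmono : ∀ m n : ℕ, m < n → c n < c m := by
      intro m n h
      have h1 : (1:ℝ)/(n+1) ≤ 1/(m+2) := by
        apply one_div_le_one_div_of_le
        · positivity
        · have : (m:ℝ) + 1 ≤ n := by exact_mod_cast Nat.succ_le_of_lt h
          linarith
      calc c n < 1/(n+1) := (hc n).2
        _ ≤ 1/(m+2) := h1
        _ < c m := (hc m).1
    have hinj : Function.Injective c := by
      intro m n hmn
      rcases lt_trichotomy m n with h | h | h
      · exact absurd hmn (ne_of_gt (hmono m n h))
      · exact h
      · exact absurd hmn (ne_of_lt (hmono n m h))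
    have hmem : ∀ n : ℕ, c n ∈ {c : ℝ | c ∈ A ∧ |c| ≤ 1} := by
      intro n
      refine ⟨hcA n, abs_le.2 ⟨?_, ?_⟩⟩
      · have h0 : (0:ℝ) < 1/(n+2) := by positivity
        nlinarith [(hc n).1]
      · have h1 : (1:ℝ)/(n+1) ≤ 1 := by
          rw [div_le_one (by positivity)]
          linarith
        nlinarith [(hc n).2]
    exact (Set.infinite_of_injective_forall_mem hinj hmem) hA1
  obtain ⟨a, hAa⟩ := (AddSubgroup.dense_or_cyclic A).resolve_left hnotdense
  have memA_iff : ∀ c : ℝ, c ∈ A ↔ ∃ k : ℤ, (k : ℝ) * a = c := by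
    intro c
    rw [hAa, AddSubgroup.mem_closure_singleton]
    simp [zsmul_eq_mul]
  -- A contains a nonzero element
  haveI := hinf
  obtain ⟨t0, ht0A, ht0ne⟩ : ∃ t0 : ℝ, t0 ∈ A ∧ t0 ≠ 0 := by
    obtain ⟨f, g, hfg, hmap⟩ := Finite.exists_ne_map_eq_of_infinite
      (fun h : H => decide ((h : ℝ ≃ᵢ ℝ) 1 - (h : ℝ ≃ᵢ ℝ) 0 = 1))
    have heq : (f:ℝ≃ᵢℝ) 1 - (f:ℝ≃ᵢℝ) 0 = (g:ℝ≃ᵢℝ) 1 - (g:ℝ≃ᵢℝ) 0 := by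
      by_cases h1 : (f:ℝ≃ᵢℝ) 1 - (f:ℝ≃ᵢℝ) 0 = 1 <;>
        by_cases h2 : (g:ℝ≃ᵢℝ) 1 - (g:ℝ≃ᵢℝ) 0 = 1
      · rw [h1, h2]
      · simp [h1, h2] at hmap
      · simp [h1, h2] at hmap
      · rw [(ee_cases _).resolve_left h1, (ee_cases _).resolve_left h2]
    set t : ℝ ≃ᵢ ℝ := (f : ℝ≃ᵢℝ) * (g : ℝ≃ᵢℝ)⁻¹ with hts
    have htH : t ∈ H := mul_mem f.2 (inv_mem g.2)
    have het : t 1 - t 0 = 1 := by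
      rw [hts, ee_mul, ee_inv, ← heq]
      rcases ee_cases (f:ℝ≃ᵢℝ) with h1 | h1 <;> rw [h1] <;> norm_num
    have htT : t = T (t 0) := trans_of_ee_one t het
    refine ⟨t 0, (memA _).2 (htT ▸ htH), ?_⟩
    intro h0
    apply hfg
    have ht1 : t = 1 := by rw [htT, h0, T_zero]
    have : (f : ℝ≃ᵢℝ) = (g : ℝ≃ᵢℝ) := by
      have := mul_inv_eq_one.1 (hts ▸ ht1 : (f : ℝ≃ᵢℝ) * (g : ℝ≃ᵢℝ)⁻¹ = 1)
      exact this
    exact Subtype.ext this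
  have ha : a ≠ 0 := by
    rintro rfl
    obtain ⟨k, hk⟩ := (memA_iff t0).1 ht0A
    rw [mul_zero] at hk
    exact ht0ne hk.symm
  have memT : ∀ k : ℤ, T ((k:ℝ) * a) ∈ H := fun k =>
    (memA _).1 ((memA_iff _).2 ⟨k, rfl⟩)
  by_cases hall : ∀ h : H, (h : ℝ≃ᵢℝ) 1 - (h:ℝ≃ᵢℝ) 0 = 1
  · -- infinite cyclic case
    left
    have hmul : ∀ k l : Multiplicative ℤ,
        T (((k*l).toAdd : ℝ) * a) = T ((k.toAdd : ℝ) * a) * T ((l.toAdd : ℝ) * a) := by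
      intro k l
      rw [← T_add]
      congr 1
      rw [toAdd_mul]
      push_cast
      ring
    let θ : Multiplicative ℤ →* H := MonoidHom.mk'
      (fun k => ⟨T ((k.toAdd : ℝ) * a), memT _⟩)
      (fun k l => Subtype.ext (hmul k l))
    have hinj : Function.Injective θ := by
      intro k l hkl
      have h1 := congrArg (fun h : H => (h : ℝ≃ᵢℝ) 0) hkl
      have h2 : (k.toAdd : ℝ) * a = (l.toAdd : ℝ) * a := by
        simpa [θ, T_apply] using h1
      have h3 : (k.toAdd : ℝ) = (l.toAdd : ℝ) := mul_right_cancel₀ ha h2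
      have h4 : k.toAdd = l.toAdd := by exact_mod_cast h3
      exact Multiplicative.toAdd.injective h4
    have hsurj : Function.Surjective θ := by
      rintro ⟨f, hf⟩
      have hft : f = T (f 0) := trans_of_ee_one f (hall ⟨f, hf⟩)
      have hf0A : f 0 ∈ A := (memA _).2 (hft ▸ hf)
      obtain ⟨k, hk⟩ := (memA_iff _).1 hf0A
      refine ⟨Multiplicative.ofAdd k, Subtype.ext ?_⟩
      show T (((Multiplicative.ofAdd k).toAdd : ℝ) * a) = f
      have hk' : ((Multiplicative.ofAdd k).toAdd : ℝ) * a = f 0 := hk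
      rw [hft, hk']
    exact ⟨(MulEquiv.ofBijective θ ⟨hinj, hsurj⟩).symm⟩
  · -- infinite dihedral case
    right
    push_neg at hall
    obtain ⟨r0, hr0e⟩ := hall
    have hr0e' : (r0:ℝ≃ᵢℝ) 1 - (r0:ℝ≃ᵢℝ) 0 = -1 := (ee_cases _).resolve_left hr0e
    set b : ℝ := (r0 : ℝ≃ᵢℝ) 0 with hb
    have hr0 : ∀ x, (r0:ℝ≃ᵢℝ) x = b - x := by
      intro x; rw [isom_affine (r0:ℝ≃ᵢℝ) x, hr0e']; ring
    have memD : ∀ d : DihedralGroup 0, dih (r0:ℝ≃ᵢℝ) a d ∈ H := by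
      rintro (i | i)
      · exact memT _
      · exact mul_mem r0.2 (memT _)
    let θ : DihedralGroup 0 →* H := MonoidHom.mk'
      (fun d => ⟨dih (r0:ℝ≃ᵢℝ) a d, memD d⟩)
      (fun d e => Subtype.ext (dih_mul (r0:ℝ≃ᵢℝ) a b hr0 d e))
    have hinj : Function.Injective θ := by
      rintro (i | i) (j | j) h
      · have hcoe := Subtype.ext_iff.1 h
        have e0 := congrArg (fun f : ℝ≃ᵢℝ => f 0) hcoe
        simp only [θ, MonoidHom.mk'_apply, dih, mul_apply, T_apply, hr0] at e0
        have hz : zi i = zi j := by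
          have : ((zi i : ℤ) : ℝ) = ((zi j : ℤ) : ℝ) := mul_right_cancel₀ ha (by linarith)
          exact_mod_cast this
        exact congrArg DihedralGroup.r hz
      · exfalso
        have hcoe := Subtype.ext_iff.1 h
        have e0 := congrArg (fun f : ℝ≃ᵢℝ => f 0) hcoe
        have e1 := congrArg (fun f : ℝ≃ᵢℝ => f 1) hcoe
        simp only [θ, MonoidHom.mk'_apply, dih, mul_apply, T_apply, hr0] at e0 e1
        linarith
      · exfalso
        have hcoe := Subtype.ext_iff.1 h
        have e0 := congrArg (fun f : ℝ≃ᵢℝ => f 0) hcoe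
        have e1 := congrArg (fun f : ℝ≃ᵢℝ => f 1) hcoe
        simp only [θ, MonoidHom.mk'_apply, dih, mul_apply, T_apply, hr0] at e0 e1
        linarith
      · have hcoe := Subtype.ext_iff.1 h
        have e0 := congrArg (fun f : ℝ≃ᵢℝ => f 0) hcoe
        simp only [θ, MonoidHom.mk'_apply, dih, mul_apply, T_apply, hr0] at e0
        have hz : zi i = zi j := by
          have : ((zi i : ℤ) : ℝ) = ((zi j : ℤ) : ℝ) := mul_right_cancel₀ ha (by linarith)
          exact_mod_cast this
        exact congrArg DihedralGroup.sr hz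
    have hsurj : Function.Surjective θ := by
      rintro ⟨f, hf⟩
      rcases ee_cases f with he | he
      · have hft : f = T (f 0) := trans_of_ee_one f he
        obtain ⟨k, hk⟩ := (memA_iff _).1 ((memA _).2 (hft ▸ hf))
        refine ⟨DihedralGroup.r (k : ZMod 0), Subtype.ext ?_⟩
        show T (((zi (k : ZMod 0)) : ℝ) * a) = f
        have hk' : ((zi (k : ZMod 0) : ℤ) : ℝ) * a = f 0 := hk
        rw [hft, hk']
      · set g : ℝ≃ᵢℝ := (r0:ℝ≃ᵢℝ)⁻¹ * f with hg
        have hgH : g ∈ H := mul_mem (inv_mem r0.2) hf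
        have hge : g 1 - g 0 = 1 := by
          rw [hg, ee_mul, ee_inv, hr0e', he]
          norm_num
        have hgt : g = T (g 0) := trans_of_ee_one g hge
        obtain ⟨k, hk⟩ := (memA_iff _).1 ((memA _).2 (hgt ▸ hgH))
        refine ⟨DihedralGroup.sr (k : ZMod 0), Subtype.ext ?_⟩
        show (r0:ℝ≃ᵢℝ) * T (((zi (k : ZMod 0)) : ℤ) * a) = f
        have hk' : ((zi (k : ZMod 0) : ℤ) : ℝ) * a = g 0 := hk
        rw [hk', ← hgt, hg, mul_inv_cancel_left]
    exact ⟨(MulEquiv.ofBijective θ ⟨hinj, hsurj⟩).symm⟩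



end Stmt8Aux

open Stmt8Aux in
/-- Let `G` be a discrete subgroup of `O(n) × Isom(ℝ)` acting freely on
`S^{n-1} × ℝ` with compact quotient.  Then the image of `G` under the projection to
`Isom(ℝ)` is an infinite discrete subgroup of `Isom(ℝ)`, hence infinite cyclic or infinite
dihedral.  (`DihedralGroup 0` is the infinite dihedral group.)

Discreteness is encoded as proper discontinuity of the displacement (`hdisc`), and
cocompactness as bounded displacement of the line factor (`hcocompact`, using that the
sphere factor is compact). -/

theorem stmt_8 (n : ℕ) (hn : 2 ≤ n)
    (G : Subgroup (Matrix.orthogonalGroup (Fin n) ℝ × (ℝ ≃ᵢ ℝ)))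
    (hfree : ∀ g ∈ G, g ≠ 1 → ∀ (x : EuclideanSpace ℝ (Fin n)) (s : ℝ), ‖x‖ = 1 →
      ¬(Matrix.toEuclideanLin (g.1 : Matrix (Fin n) (Fin n) ℝ) x = x ∧ g.2 s = s))
    (hdisc : ∀ s : ℝ, {g : G | |(g : Matrix.orthogonalGroup (Fin n) ℝ × (ℝ ≃ᵢ ℝ)).2 s - s| ≤ 1}.Finite)
    (hcocompact : ∃ D : ℝ, 0 < D ∧ ∀ s : ℝ, ∃ g ∈ G, |g.2 s| ≤ D) :
    Infinite (Subgroup.map (MonoidHom.snd (Matrix.orthogonalGroup (Fin n) ℝ) (ℝ ≃ᵢ ℝ)) G) ∧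
      (Nonempty ((Subgroup.map (MonoidHom.snd (Matrix.orthogonalGroup (Fin n) ℝ) (ℝ ≃ᵢ ℝ)) G) ≃*
          Multiplicative ℤ) ∨
        Nonempty ((Subgroup.map (MonoidHom.snd (Matrix.orthogonalGroup (Fin n) ℝ) (ℝ ≃ᵢ ℝ)) G) ≃*
          DihedralGroup 0)) := by
  classical
  set H : Subgroup (ℝ ≃ᵢ ℝ) :=
    Subgroup.map (MonoidHom.snd (Matrix.orthogonalGroup (Fin n) ℝ) (ℝ ≃ᵢ ℝ)) G with hH
  -- discreteness of the image at 0
  have hd : {h : H | |(h : ℝ ≃ᵢ ℝ) 0| ≤ 1}.Finite := by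
    have h0 := hdisc 0
    have hS : {f : ℝ ≃ᵢ ℝ | f ∈ H ∧ |f 0| ≤ 1}.Finite := by
      have himg := h0.image
        (fun g : G => (g : Matrix.orthogonalGroup (Fin n) ℝ × (ℝ ≃ᵢ ℝ)).2)
      apply himg.subset
      rintro f ⟨hfH, hf1⟩
      obtain ⟨g, hgG, hg2⟩ := Subgroup.mem_map.1 hfH
      refine ⟨⟨g, hgG⟩, ?_, hg2⟩
      show |g.2 0 - 0| ≤ 1
      have : g.2 = f := hg2
      rw [this, sub_zero]
      exact hf1
    have hpre := hS.preimage
      (Set.injOn_of_injective (Subtype.val_injective (p := fun f => f ∈ H)))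
    apply hpre.subset
    intro h hh
    exact ⟨h.2, hh⟩
  -- the image is infinite
  obtain ⟨D, hD, hcc⟩ := hcocompact
  have hex : ∀ k : ℕ, ∃ g ∈ G, |g.2 (3*D*k)| ≤ D := fun k => hcc _
  choose g hgG hgD using hex
  have hmem : ∀ k : ℕ, (g k).2 ∈ H := fun k =>
    Subgroup.mem_map.2 ⟨g k, hgG k, rfl⟩
  have hinj : Function.Injective (fun k : ℕ => (⟨(g k).2, hmem k⟩ : H)) := by
    intro k m hkm
    by_contra hne
    have hfe : (g k).2 = (g m).2 := congrArg Subtype.val hkm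
    set f : ℝ ≃ᵢ ℝ := (g m).2 with hf
    have hk1 : |f (3*D*k)| ≤ D := by rw [← hfe]; exact hgD k
    have hm1 : |f (3*D*m)| ≤ D := hgD m
    have hdist : |f (3*D*k) - f (3*D*m)| = |3*D*k - 3*D*m| := by
      have := f.dist_eq (3*D*k) (3*D*m)
      simpa [Real.dist_eq] using this
    have h1 : (1:ℝ) ≤ |(k:ℝ) - m| := by
      have hz : (k:ℤ) - m ≠ 0 := by
        intro hzz
        apply hne
        have : (k:ℤ) = m := by linarith [hzz]
        exact_mod_cast this
      have := Int.one_le_abs hz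
      exact_mod_cast this
    have h2 : |3*D*(k:ℝ) - 3*D*m| = 3*D*|(k:ℝ) - m| := by
      rw [show 3*D*(k:ℝ) - 3*D*m = 3*D*((k:ℝ) - m) by ring, abs_mul,
        abs_of_pos (by linarith)]
    have h3 := abs_le.1 hk1
    have h4 := abs_le.1 hm1
    have h5 := abs_le.1 (le_of_eq hdist.symm) -- not quite; do directly
    have h6 : |f (3*D*k) - f (3*D*m)| ≤ 2*D := by
      rw [abs_le]; constructor <;> linarith
    rw [hdist, h2] at h6
    nlinarith
  have hinf : Infinite H := Infinite.of_injective _ hinj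
  exact ⟨hinf, key H hd hinf⟩
end

section
/- Let Γ ≤ O(n) be finite acting freely on S^{n−1} and suppose a smooth connected noncompact n-manifold M admits an exhaustion by nested open sets each diffeomorphic to (S^{n−1}/Γ) × (0,1) with compatible gluings (i.e., M fibers as a tube over ℝ). Then M is diffeomorphic to (S^{n−1}/Γ) × ℝ. -/
/-- The unit sphere `S^{n-1} ⊆ ℝⁿ`, as a subtype. -/
abbrev sphereN (n : ℕ) : Type := {v : EuclideanSpace ℝ (Fin n) // ‖v‖ = 1}

/-- The cross-section `S^{n-1}/Γ`. -/
abbrev sphereQuot (n : ℕ) (Γ : Subgroup (Matrix.orthogonalGroup (Fin n) ℝ)) : Type :=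
  Quot fun x y : sphereN n =>
    ∃ γ ∈ Γ, Matrix.toEuclideanLin (γ : Matrix (Fin n) (Fin n) ℝ) x.1 = y.1

open Set Real in


noncomputable def iooHomeoReal {A B : ℝ} (h : A < B) : (Set.Ioo A B) ≃ₜ ℝ := by
  have hk : (0:ℝ) < (B - A)/π := div_pos (by linarith) Real.pi_pos
  have him : (affineHomeomorph ((B-A)/π) ((A+B)/2) hk.ne') '' (Set.Ioo (-(π/2)) (π/2)) = Set.Ioo A B := by
    have : ⇑(affineHomeomorph ((B-A)/π) ((A+B)/2) hk.ne') = fun x => ((B-A)/π) * x + (A+B)/2 := rfl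
    rw [this, Set.image_affine_Ioo hk]
    have hpi := Real.pi_ne_zero
    have e1 : (B-A)/π * (-(π/2)) + (A+B)/2 = A := by field_simp; ring
    have e2 : (B-A)/π * (π/2) + (A+B)/2 = B := by field_simp; ring
    rw [e1, e2]
  exact ((Homeomorph.setCongr him).symm.trans
    ((affineHomeomorph ((B-A)/π) ((A+B)/2) hk.ne').image (Set.Ioo (-(π/2)) (π/2))).symm).trans
    Real.tanOrderIso.toHomeomorph

noncomputable def ioiHomeoReal (A : ℝ) : (Set.Ioi A) ≃ₜ ℝ := by
  have him : (affineHomeomorph (1:ℝ) A one_ne_zero) '' (Set.Ioi (0:ℝ)) = Set.Ioi A := by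
    have : ⇑(affineHomeomorph (1:ℝ) A one_ne_zero) = fun x => x + A := by
      funext x; show 1 * x + A = x + A; ring
    rw [this, Set.image_add_const_Ioi]; simp
  exact ((Homeomorph.setCongr him).symm.trans
    ((affineHomeomorph (1:ℝ) A one_ne_zero).image (Set.Ioi 0)).symm).trans
    Real.expOrderIso.symm.toHomeomorph

noncomputable def iioHomeoReal (B : ℝ) : (Set.Iio B) ≃ₜ ℝ := by
  have him : (affineHomeomorph (-1:ℝ) B (by norm_num)) '' (Set.Ioi (0:ℝ)) = Set.Iio B := by
    have : ⇑(affineHomeomorph (-1:ℝ) B (by norm_num)) = fun x => B - x := by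
      funext x; show -1 * x + B = B - x; ring
    rw [this, Set.image_const_sub_Ioi]; simp
  exact ((Homeomorph.setCongr him).symm.trans
    ((affineHomeomorph (-1:ℝ) B (by norm_num)).image (Set.Ioi 0)).symm).trans
    Real.expOrderIso.symm.toHomeomorph

theorem iUnion_Ioo_homeo {l r : ℕ → ℝ} (hl : Antitone l) (hr : Monotone r)
    (hlr : ∀ i, l i < r i) : Nonempty ((⋃ i, Set.Ioo (l i) (r i) : Set ℝ) ≃ₜ ℝ) := by
  have hmemU : ∀ t, (∃ i, l i < t) → (∃ j, t < r j) → t ∈ ⋃ i, Set.Ioo (l i) (r i) := by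
    rintro t ⟨i, hi⟩ ⟨j, hj⟩
    exact Set.mem_iUnion.2 ⟨max i j, lt_of_le_of_lt (hl (le_max_left i j)) hi,
      lt_of_lt_of_le hj (hr (le_max_right i j))⟩
  by_cases hb : BddBelow (Set.range l) <;> by_cases ha : BddAbove (Set.range r)
  · -- Ioo
    set A := ⨅ i, l i with hA
    set B := ⨆ i, r i with hB
    have hAB : A < B := lt_of_le_of_lt (ciInf_le hb 0) (lt_of_lt_of_le (hlr 0) (le_ciSup ha 0))
    have hJ : (⋃ i, Set.Ioo (l i) (r i)) = Set.Ioo A B := by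
      apply Set.Subset.antisymm
      · rintro t ht
        obtain ⟨i, hi⟩ := Set.mem_iUnion.1 ht
        exact ⟨lt_of_le_of_lt (ciInf_le hb i) hi.1, lt_of_lt_of_le hi.2 (le_ciSup ha i)⟩
      · rintro t ⟨h1, h2⟩
        apply hmemU
        · by_contra hc; push_neg at hc
          exact absurd (le_ciInf hc) (not_le.2 h1)
        · by_contra hc; push_neg at hc
          exact absurd (ciSup_le hc) (not_le.2 h2)
    exact ⟨(Homeomorph.setCongr hJ).trans (iooHomeoReal hAB)⟩
  · -- Ioi
    set A := ⨅ i, l i with hA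
    have hJ : (⋃ i, Set.Ioo (l i) (r i)) = Set.Ioi A := by
      apply Set.Subset.antisymm
      · rintro t ht
        obtain ⟨i, hi⟩ := Set.mem_iUnion.1 ht
        exact lt_of_le_of_lt (ciInf_le hb i) hi.1
      · rintro t h1
        apply hmemU
        · by_contra hc; push_neg at hc
          exact absurd (le_ciInf hc) (not_le.2 h1)
        · obtain ⟨y, ⟨j, rfl⟩, hy⟩ := not_bddAbove_iff.1 ha t
          exact ⟨j, hy⟩
    exact ⟨(Homeomorph.setCongr hJ).trans (ioiHomeoReal A)⟩
  · -- Iio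
    set B := ⨆ i, r i with hB
    have hJ : (⋃ i, Set.Ioo (l i) (r i)) = Set.Iio B := by
      apply Set.Subset.antisymm
      · rintro t ht
        obtain ⟨i, hi⟩ := Set.mem_iUnion.1 ht
        exact lt_of_lt_of_le hi.2 (le_ciSup ha i)
      · rintro t h2
        apply hmemU
        · obtain ⟨y, ⟨j, rfl⟩, hy⟩ := not_bddBelow_iff.1 hb t
          exact ⟨j, hy⟩
        · by_contra hc; push_neg at hc
          exact absurd (ciSup_le hc) (not_le.2 h2)
    exact ⟨(Homeomorph.setCongr hJ).trans (iioHomeoReal B)⟩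
  · -- univ
    have hJ : (⋃ i, Set.Ioo (l i) (r i)) = Set.univ := by
      apply Set.eq_univ_of_forall
      intro t
      apply hmemU
      · obtain ⟨y, ⟨j, rfl⟩, hy⟩ := not_bddBelow_iff.1 hb t
        exact ⟨j, hy⟩
      · obtain ⟨y, ⟨j, rfl⟩, hy⟩ := not_bddAbove_iff.1 ha t
        exact ⟨j, hy⟩
    exact ⟨(Homeomorph.setCongr hJ).trans (Homeomorph.Set.univ ℝ)⟩

noncomputable def unitParam (a b t : ℝ) (h : t ∈ Set.Ioo a b) : Set.Ioo (0:ℝ) 1 :=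
  ⟨(t - a)/(b - a), div_pos (by linarith [h.1]) (by linarith [h.1, h.2]),
    (div_lt_one (by linarith [h.1, h.2])).2 (by linarith [h.1, h.2])⟩

structure TubeData (N : Type*) (M : Type*) [TopologicalSpace N] [TopologicalSpace M] where
  U : ℕ → Set M
  e : ∀ i, (U i) ≃ₜ N × Set.Ioo (0:ℝ) 1
  p : M → ℝ
  hp : Continuous p
  a : ℕ → ℝ
  b : ℕ → ℝ
  l : ℕ → ℝ
  r : ℕ → ℝ
  hU : ∀ i, U i = p ⁻¹' Set.Ioo (a i) (b i)
  hfib : ∀ i (x : U i), p x.1 = a i + (b i - a i) * ((e i x).2 : ℝ)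
  hIoo : ∀ i, Set.Ioo (a i) (b i) ⊆ Set.Ioo (a (i+1)) (b (i+1))
  hlr : ∀ i, l i < r i
  hIcc : ∀ i, Set.Icc (l i) (r i) ⊆ Set.Ioo (a i) (b i)
  hlmono : Antitone l
  hrmono : Monotone r

namespace TubeData

variable {N M : Type*} [TopologicalSpace N] [TopologicalSpace M] (D : TubeData N M)

lemma p_mem (i : ℕ) (x : D.U i) : D.p x.1 ∈ Set.Ioo (D.a i) (D.b i) := by
  have h : D.U i ⊆ D.p ⁻¹' Set.Ioo (D.a i) (D.b i) := le_of_eq (D.hU i)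
  exact h x.2

lemma hab (i : ℕ) : D.a i < D.b i := by
  have h := D.hIcc i ⟨le_refl (D.l i), (D.hlr i).le⟩
  exact lt_trans h.1 h.2

noncomputable def pt (i : ℕ) (θ : N) (t : ℝ) (h : t ∈ Set.Ioo (D.a i) (D.b i)) : M :=
  ((D.e i).symm (θ, unitParam _ _ t h)).1

lemma pt_mem (i : ℕ) (θ : N) (t : ℝ) (h : t ∈ Set.Ioo (D.a i) (D.b i)) :
    D.pt i θ t h ∈ D.U i := ((D.e i).symm (θ, unitParam _ _ t h)).2

lemma e_pt (i : ℕ) (θ : N) (t : ℝ) (h : t ∈ Set.Ioo (D.a i) (D.b i)) :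
    (D.e i) ⟨D.pt i θ t h, D.pt_mem i θ t h⟩ = (θ, unitParam _ _ t h) :=
  (D.e i).apply_symm_apply _

lemma p_pt (i : ℕ) (θ : N) (t : ℝ) (h : t ∈ Set.Ioo (D.a i) (D.b i)) :
    D.p (D.pt i θ t h) = t := by
  have h2 := D.hfib i ⟨D.pt i θ t h, D.pt_mem i θ t h⟩
  rw [D.e_pt] at h2
  have hne : D.b i - D.a i ≠ 0 := by have := D.hab i; linarith
  simp only [unitParam] at h2
  rw [h2]; field_simp; ring

lemma snd_eq (i : ℕ) (x : D.U i) :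
    ((D.e i) x).2 = unitParam (D.a i) (D.b i) (D.p x.1) (D.p_mem i x) := by
  apply Subtype.ext
  have h2 := D.hfib i x
  have hne : D.b i - D.a i ≠ 0 := by have := D.hab i; linarith
  show ((D.e i x).2 : ℝ) = (D.p x.1 - D.a i)/(D.b i - D.a i)
  rw [h2]; field_simp; ring

lemma pt_eq_self (i : ℕ) (x : D.U i) :
    D.pt i ((D.e i) x).1 (D.p x.1) (D.p_mem i x) = x.1 := by
  unfold pt
  rw [← D.snd_eq i x]
  rw [(D.e i).symm_apply_apply x]

lemma pt_congr (i : ℕ) (θ : N) {t t' : ℝ} (h : t ∈ Set.Ioo (D.a i) (D.b i)) (heq : t = t') :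
    D.pt i θ t h = D.pt i θ t' (heq ▸ h) := by subst heq; rfl

lemma pt_congr' (i : ℕ) (θ : N) {t t' : ℝ} (h : t ∈ Set.Ioo (D.a i) (D.b i))
    (h' : t' ∈ Set.Ioo (D.a i) (D.b i)) (heq : t = t') :
    D.pt i θ t h = D.pt i θ t' h' := by subst heq; rfl

lemma hIooLE {i j : ℕ} (hij : i ≤ j) :
    Set.Ioo (D.a i) (D.b i) ⊆ Set.Ioo (D.a j) (D.b j) := by
  induction j, hij using Nat.le_induction with
  | base => exact subset_rfl
  | succ j hij ih => exact ih.trans (D.hIoo j)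

lemma hUsub {i j : ℕ} (hij : i ≤ j) : D.U i ⊆ D.U j := by
  rw [D.hU i, D.hU j]; exact Set.preimage_mono (D.hIooLE hij)

lemma hIccLE {i j : ℕ} (hij : i ≤ j) :
    Set.Icc (D.l i) (D.r i) ⊆ Set.Icc (D.l j) (D.r j) :=
  Set.Icc_subset_Icc (D.hlmono hij) (D.hrmono hij)

def clamp (i : ℕ) (t : ℝ) : ℝ := max (D.l i) (min (D.r i) t)

lemma clamp_mem (i : ℕ) (t : ℝ) : D.clamp i t ∈ Set.Icc (D.l i) (D.r i) :=
  ⟨le_max_left _ _, max_le (D.hlr i).le (min_le_left _ _)⟩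

lemma clamp_eq (i : ℕ) {t : ℝ} (h : t ∈ Set.Icc (D.l i) (D.r i)) : D.clamp i t = t := by
  unfold clamp; rw [min_eq_right h.2, max_eq_right h.1]

lemma clamp_cont (i : ℕ) : Continuous (D.clamp i) :=
  continuous_const.max (continuous_const.min continuous_id)

lemma clamp_mem_Ioo (i : ℕ) (t : ℝ) : D.clamp i t ∈ Set.Ioo (D.a i) (D.b i) :=
  D.hIcc i (D.clamp_mem i t)

lemma clamp_mem_Ioo' (i : ℕ) (t : ℝ) : D.clamp i t ∈ Set.Ioo (D.a (i+1)) (D.b (i+1)) :=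
  D.hIoo i (D.clamp_mem_Ioo i t)

noncomputable def theta : ∀ i, (D.U i) → N
  | 0 => fun x => ((D.e 0) x).1
  | (i+1) => fun x =>
      theta i ⟨D.pt (i+1) ((D.e (i+1)) x).1 (D.clamp i (D.p x.1)) (D.clamp_mem_Ioo' i _),
        by rw [D.hU i]; exact Set.mem_preimage.2 (by rw [D.p_pt]; exact D.clamp_mem_Ioo i _)⟩

lemma theta_succ (i : ℕ) (x : D.U (i+1)) :
    D.theta (i+1) x
      = D.theta i ⟨D.pt (i+1) ((D.e (i+1)) x).1 (D.clamp i (D.p x.1)) (D.clamp_mem_Ioo' i _),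
        by rw [D.hU i]; exact Set.mem_preimage.2 (by rw [D.p_pt]; exact D.clamp_mem_Ioo i _)⟩ :=
  rfl

lemma theta_cont (i : ℕ) : Continuous (D.theta i) := by
  induction i with
  | zero => exact continuous_fst.comp (D.e 0).continuous
  | succ i ih =>
    refine ih.comp ?_
    refine Continuous.subtype_mk ?_ _
    unfold pt
    refine Continuous.subtype_val ?_
    refine ((D.e (i+1)).continuous_symm).comp ?_
    refine Continuous.prodMk (continuous_fst.comp (D.e (i+1)).continuous) ?_
    refine Continuous.subtype_mk ?_ _
    exact (((D.clamp_cont i).comp (D.hp.comp continuous_subtype_val)).sub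
      continuous_const).div_const _

lemma mem_U_of_Icc {i : ℕ} {x : M} (h : D.p x ∈ Set.Icc (D.l i) (D.r i)) : x ∈ D.U i := by
  rw [D.hU i]; exact Set.mem_preimage.2 (D.hIcc i h)

lemma theta_agree (i : ℕ) (x : D.U (i+1)) (h : D.p x.1 ∈ Set.Icc (D.l i) (D.r i)) :
    D.theta (i+1) x = D.theta i ⟨x.1, D.mem_U_of_Icc h⟩ := by
  rw [D.theta_succ]
  congr 1
  apply Subtype.ext
  show D.pt (i+1) ((D.e (i+1)) x).1 (D.clamp i (D.p x.1)) _ = x.1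
  rw [D.pt_congr (i+1) _ _ (D.clamp_eq i h)]
  exact D.pt_eq_self (i+1) x

lemma theta_stable {i j : ℕ} (hij : i ≤ j) (x : M) (h : D.p x ∈ Set.Icc (D.l i) (D.r i))
    (hxj : x ∈ D.U j) (hxi : x ∈ D.U i) :
    D.theta j ⟨x, hxj⟩ = D.theta i ⟨x, hxi⟩ := by
  induction j, hij using Nat.le_induction with
  | base => rfl
  | succ j hij ih =>
    have h' : D.p x ∈ Set.Icc (D.l j) (D.r j) := D.hIccLE hij h
    rw [D.theta_agree j ⟨x, hxj⟩ h']
    exact ih (D.mem_U_of_Icc h')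

lemma eq_pt (i : ℕ) (x : D.U i) {t : ℝ} (ht : t ∈ Set.Ioo (D.a i) (D.b i))
    (hpx : D.p x.1 = t) : x.1 = D.pt i ((D.e i) x).1 t ht := by
  rw [← D.pt_congr i _ (D.p_mem i x) hpx]
  exact (D.pt_eq_self i x).symm

lemma fst_inj (i : ℕ) (x y : D.U i) (hp : D.p x.1 = D.p y.1)
    (hfst : ((D.e i) x).1 = ((D.e i) y).1) : x = y := by
  apply (D.e i).injective
  apply Prod.ext hfst
  rw [D.snd_eq i x, D.snd_eq i y]
  apply Subtype.ext
  show (D.p x.1 - D.a i)/(D.b i - D.a i) = (D.p y.1 - D.a i)/(D.b i - D.a i)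
  rw [hp]

lemma theta_fiber (i : ℕ) (t : ℝ) (ht : t ∈ Set.Ioo (D.a i) (D.b i)) (θ : N) :
    ∃! x : D.U i, D.p x.1 = t ∧ D.theta i x = θ := by
  induction i generalizing t θ with
  | zero =>
    refine ⟨⟨D.pt 0 θ t ht, D.pt_mem 0 θ t ht⟩, ⟨D.p_pt 0 θ t ht, ?_⟩, ?_⟩
    · show ((D.e 0) ⟨D.pt 0 θ t ht, _⟩).1 = θ
      rw [D.e_pt 0 θ t ht]
    · rintro y ⟨hpy, hθy⟩
      apply D.fst_inj 0 y _ (by rw [hpy, D.p_pt])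
      rw [D.e_pt 0 θ t ht]
      exact hθy
  | succ i ih =>
    set t' := D.clamp i t with ht'def
    have ht'i : t' ∈ Set.Ioo (D.a i) (D.b i) := D.clamp_mem_Ioo i t
    have ht'si : t' ∈ Set.Ioo (D.a (i+1)) (D.b (i+1)) := D.clamp_mem_Ioo' i t
    obtain ⟨y, ⟨hpy, hθy⟩, hyu⟩ := ih t' ht'i θ
    have hysucc : y.1 ∈ D.U (i+1) := D.hUsub (Nat.le_succ i) y.2
    set θ' := ((D.e (i+1)) ⟨y.1, hysucc⟩).1 with hθ'def
    refine ⟨⟨D.pt (i+1) θ' t ht, D.pt_mem _ _ _ _⟩, ⟨D.p_pt _ _ _ _, ?_⟩, ?_⟩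
    · rw [D.theta_succ, ← hθy]
      have hfst : ((D.e (i+1)) ⟨D.pt (i+1) θ' t ht, D.pt_mem _ _ _ _⟩).1 = θ' := by
        rw [D.e_pt]
      have hclamp : D.clamp i (D.p (D.pt (i+1) θ' t ht)) = t' := by
        rw [D.p_pt]
      apply congrArg
      apply Subtype.ext
      show D.pt (i+1) ((D.e (i+1)) ⟨D.pt (i+1) θ' t ht, D.pt_mem _ _ _ _⟩).1
          (D.clamp i (D.p (D.pt (i+1) θ' t ht))) (D.clamp_mem_Ioo' i _) = y.1
      rw [D.pt_congr' _ _ _ (D.hIoo i ht'i) hclamp, hfst]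
      exact (D.eq_pt (i+1) ⟨y.1, hysucc⟩ ht'si hpy).symm
    · rintro z ⟨hpz, hθz⟩
      have hclampz : D.clamp i (D.p z.1) = t' := by rw [hpz]
      have hwmem : D.pt (i+1) ((D.e (i+1)) z).1 (D.clamp i (D.p z.1)) (D.clamp_mem_Ioo' i _)
          ∈ D.U i := by
        rw [D.hU i]; exact Set.mem_preimage.2 (by rw [D.p_pt]; exact D.clamp_mem_Ioo i _)
      have hw : (⟨D.pt (i+1) ((D.e (i+1)) z).1 (D.clamp i (D.p z.1)) (D.clamp_mem_Ioo' i _),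
          hwmem⟩ : D.U i) = y := by
        apply hyu
        constructor
        · rw [D.p_pt, hclampz]
        · rw [D.theta_succ] at hθz
          exact hθz
      have hfz : ((D.e (i+1)) z).1 = θ' := by
        have hval : D.pt (i+1) ((D.e (i+1)) z).1 t' (D.hIoo i ht'i) = y.1 := by
          have h5 := congrArg Subtype.val hw
          have h6 : D.pt (i+1) ((D.e (i+1)) z).1 (D.clamp i (D.p z.1)) (D.clamp_mem_Ioo' i _)
              = D.pt (i+1) ((D.e (i+1)) z).1 t' (D.hIoo i ht'i) :=
            D.pt_congr' _ _ _ _ hclampz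
          rw [← h6]
          exact h5
        have h2 : D.pt (i+1) θ' t' (D.hIoo i ht'i) = y.1 :=
          (D.eq_pt (i+1) ⟨y.1, hysucc⟩ ht'si hpy).symm
        have h3 : (⟨D.pt (i+1) ((D.e (i+1)) z).1 t' (D.hIoo i ht'i), D.pt_mem _ _ _ _⟩ : D.U (i+1))
            = ⟨D.pt (i+1) θ' t' (D.hIoo i ht'i), D.pt_mem _ _ _ _⟩ := Subtype.ext (by
              show D.pt (i+1) ((D.e (i+1)) z).1 t' (D.hIoo i ht'i)
                  = D.pt (i+1) θ' t' (D.hIoo i ht'i)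
              rw [hval, h2])
        have h4 := congrArg (fun w => ((D.e (i+1)) w).1) h3
        simpa only [D.e_pt] using h4
      apply D.fst_inj (i+1) z _ (by rw [hpz, D.p_pt])
      rw [hfz, D.e_pt]

lemma mem_U_succ_of_Ioo {i : ℕ} {x : M} (h : D.p x ∈ Set.Ioo (D.l i) (D.r i)) :
    x ∈ D.U (i+1) := by
  rw [D.hU]; exact Set.mem_preimage.2 (D.hIoo i (D.hIcc i (Set.Ioo_subset_Icc_self h)))

variable (hcov : ∀ x : M, ∃ i, D.p x ∈ Set.Ioo (D.l i) (D.r i))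

noncomputable def Theta (x : M) : N :=
  D.theta (Nat.find (hcov x) + 1) ⟨x, D.mem_U_succ_of_Ioo (Nat.find_spec (hcov x))⟩

lemma Theta_eq (x : M) (i : ℕ) (hi : D.p x ∈ Set.Ioo (D.l i) (D.r i)) (hx : x ∈ D.U (i+1)) :
    D.Theta hcov x = D.theta (i+1) ⟨x, hx⟩ := by
  set i0 := Nat.find (hcov x) with hi0
  have hsp : D.p x ∈ Set.Ioo (D.l i0) (D.r i0) := Nat.find_spec (hcov x)
  set j := max i i0 with hj
  have hxj : x ∈ D.U (j+1) :=
    D.hUsub (Nat.succ_le_succ (le_max_left i i0)) hx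
  have h1 : D.theta (j+1) ⟨x, hxj⟩ = D.theta (i+1) ⟨x, hx⟩ :=
    D.theta_stable (Nat.succ_le_succ (le_max_left i i0)) x
      (D.hIccLE (Nat.le_succ i) (Set.Ioo_subset_Icc_self hi)) hxj hx
  have h2 : D.theta (j+1) ⟨x, hxj⟩
      = D.theta (i0+1) ⟨x, D.mem_U_succ_of_Ioo hsp⟩ :=
    D.theta_stable (Nat.succ_le_succ (le_max_right i i0)) x
      (D.hIccLE (Nat.le_succ i0) (Set.Ioo_subset_Icc_self hsp)) hxj _
  show D.theta (i0+1) _ = _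
  rw [← h2, h1]

lemma Theta_cont : Continuous (D.Theta hcov) := by
  rw [continuous_iff_continuousAt]
  intro x
  obtain ⟨i, hi⟩ := hcov x
  classical
  set F : M → N := fun y => if h : y ∈ D.U (i+1) then D.theta (i+1) ⟨y, h⟩ else D.Theta hcov x
    with hF
  have hFcont : ContinuousOn F (D.U (i+1)) := by
    rw [continuousOn_iff_continuous_restrict]
    have hres : (D.U (i+1)).domRestrict F = D.theta (i+1) := by
      funext y
      exact dif_pos y.2
    rw [hres]; exact D.theta_cont (i+1)
  have hUopen : IsOpen (D.U (i+1)) := by rw [D.hU]; exact isOpen_Ioo.preimage D.hp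
  have hVopen : IsOpen (D.p ⁻¹' Set.Ioo (D.l i) (D.r i)) := isOpen_Ioo.preimage D.hp
  have hsub : D.p ⁻¹' Set.Ioo (D.l i) (D.r i) ⊆ D.U (i+1) :=
    fun y hy => D.mem_U_succ_of_Ioo hy
  have hFat : ContinuousAt F x := hFcont.continuousAt (hUopen.mem_nhds (hsub hi))
  apply ContinuousAt.congr hFat
  apply Filter.eventuallyEq_of_mem (hVopen.mem_nhds hi)
  intro y hy
  show F y = D.Theta hcov y
  rw [D.Theta_eq hcov y i hy (hsub hy)]
  simp only [hF]
  rw [dif_pos (hsub hy)]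

theorem exists_homeo [T2Space M] [CompactSpace N] [T2Space N] [Nonempty N]
    (hcov' : ∀ x : M, ∃ i, D.p x ∈ Set.Ioo (D.l i) (D.r i))
    (hproper : ∀ K : Set ℝ, IsCompact K → IsCompact (D.p ⁻¹' K)) :
    Nonempty (M ≃ₜ N × ℝ) := by
  obtain ⟨eJ⟩ := iUnion_Ioo_homeo D.hlmono D.hrmono D.hlr
  set J := ⋃ i, Set.Ioo (D.l i) (D.r i) with hJdef
  have hJopen : IsOpen J := isOpen_iUnion (fun i => isOpen_Ioo)
  set Φ : M → N × J := fun x => (D.Theta hcov' x,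
    ⟨D.p x, Set.mem_iUnion.2 ⟨Nat.find (hcov' x), Nat.find_spec (hcov' x)⟩⟩) with hΦ
  have hcont : Continuous Φ := (D.Theta_cont hcov').prodMk (D.hp.subtype_mk _)
  have hinj : Function.Injective Φ := by
    intro x y hxy
    have hpxy : D.p x = D.p y := congrArg (fun z => (z.2 : ℝ)) hxy
    have hθ : D.Theta hcov' x = D.Theta hcov' y := congrArg Prod.fst hxy
    obtain ⟨i, hi⟩ := hcov' x
    have hiy : D.p y ∈ Set.Ioo (D.l i) (D.r i) := hpxy ▸ hi
    have hx1 : x ∈ D.U (i+1) := D.mem_U_succ_of_Ioo hi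
    have hy1 : y ∈ D.U (i+1) := D.mem_U_succ_of_Ioo hiy
    rw [D.Theta_eq hcov' x i hi hx1, D.Theta_eq hcov' y i hiy hy1] at hθ
    have ht : D.p x ∈ Set.Ioo (D.a (i+1)) (D.b (i+1)) :=
      D.hIoo i (D.hIcc i (Set.Ioo_subset_Icc_self hi))
    obtain ⟨z, hz, hzu⟩ := D.theta_fiber (i+1) (D.p x) ht (D.theta (i+1) ⟨x, hx1⟩)
    have e1 : (⟨x, hx1⟩ : D.U (i+1)) = z := hzu _ ⟨rfl, rfl⟩
    have e2 : (⟨y, hy1⟩ : D.U (i+1)) = z := hzu _ ⟨hpxy.symm, hθ.symm⟩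
    exact congrArg Subtype.val (e1.trans e2.symm)
  have hsurj : Function.Surjective Φ := by
    rintro ⟨θ, t, ht⟩
    obtain ⟨i, hi⟩ := Set.mem_iUnion.1 ht
    have hti : t ∈ Set.Ioo (D.a (i+1)) (D.b (i+1)) :=
      D.hIoo i (D.hIcc i (Set.Ioo_subset_Icc_self hi))
    obtain ⟨x, ⟨hpx, hθx⟩, -⟩ := D.theta_fiber (i+1) t hti θ
    refine ⟨x.1, ?_⟩
    have hix : D.p x.1 ∈ Set.Ioo (D.l i) (D.r i) := by rw [hpx]; exact hi
    apply Prod.ext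
    · show D.Theta hcov' x.1 = θ
      rw [D.Theta_eq hcov' x.1 i hix x.2, Subtype.coe_eta]
      exact hθx
    · exact Subtype.ext hpx
  haveI : LocallyCompactSpace J := hJopen.locallyCompactSpace
  have hprop : IsProperMap Φ := by
    rw [isProperMap_iff_isCompact_preimage]
    refine ⟨hcont, fun K hK => ?_⟩
    have hsubK : Φ ⁻¹' K ⊆ D.p ⁻¹' (Subtype.val '' (Prod.snd '' K)) := by
      intro x hx
      exact Set.mem_preimage.2
        (Set.mem_image_of_mem Subtype.val
          (Set.mem_image_of_mem Prod.snd (Set.mem_preimage.1 hx)))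
    exact IsCompact.of_isClosed_subset
      (hproper _ ((hK.image continuous_snd).image continuous_subtype_val))
      (hK.isClosed.preimage hcont) hsubK
  have hopenmap : IsOpenMap Φ := by
    intro V hV
    have h1 : Φ '' V = (Φ '' Vᶜ)ᶜ := by
      rw [Set.image_compl_eq ⟨hinj, hsurj⟩, compl_compl]
    rw [h1]
    exact (hprop.isClosedMap Vᶜ hV.isClosed_compl).isOpen_compl
  exact ⟨(Equiv.toHomeomorphOfContinuousOpen
    (Equiv.ofBijective Φ ⟨hinj, hsurj⟩) hcont hopenmap).trans
    ((Homeomorph.refl N).prodCongr eJ)⟩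

end TubeData

theorem neck_eq {N M : Type*} [TopologicalSpace N] [TopologicalSpace M]
    [T2Space M] [CompactSpace N] [Nonempty N] [ConnectedSpace N]
    (U : ℕ → Set M) (hopen : ∀ i, IsOpen (U i)) (hmono : Monotone U)
    (hcover : ⋃ i, U i = Set.univ)
    (e : ∀ i, (U i) ≃ₜ N × Set.Ioo (0:ℝ) 1)
    (p : M → ℝ)
    (hproper : ∀ K : Set ℝ, IsCompact K → IsCompact (p ⁻¹' K))
    (a b : ℕ → ℝ) (hab : ∀ i, a i < b i)
    (hfib : ∀ i (x : U i), p x.1 = a i + (b i - a i) * ((e i x).2 : ℝ)) (i : ℕ) :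
    U i = p ⁻¹' Set.Ioo (a i) (b i) := by
  classical
  -- p maps U j into Ioo (a j) (b j)
  have hpmem : ∀ j (x : U j), p x.1 ∈ Set.Ioo (a j) (b j) := by
    intro j x
    have h := hfib j x
    have hs1 : (0:ℝ) < ((e j x).2 : ℝ) := ((e j x).2).2.1
    have hs2 : ((e j x).2 : ℝ) < 1 := ((e j x).2).2.2
    have hab' : a j < b j := hab j
    constructor <;> nlinarith
  -- section maps
  have hsec : ∀ j (θ : N) (t : ℝ) (ht : t ∈ Set.Ioo (a j) (b j)),
      ∃ x : U j, p x.1 = t ∧ (e j) x = (θ, unitParam _ _ t ht) := by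
    intro j θ t ht
    refine ⟨(e j).symm (θ, unitParam _ _ t ht), ?_, (e j).apply_symm_apply _⟩
    have h := hfib j ((e j).symm (θ, unitParam _ _ t ht))
    rw [(e j).apply_symm_apply] at h
    have hne : b j - a j ≠ 0 := by have := ht.1.trans ht.2; linarith
    rw [h]
    show a j + (b j - a j) * ((t - a j)/(b j - a j)) = t
    field_simp
    ring
  -- snd is determined by p
  have hsnd : ∀ j (x : U j), ((e j) x).2 = unitParam (a j) (b j) (p x.1) (hpmem j x) := by
    intro j x
    apply Subtype.ext
    have h := hfib j x
    have h2 := hpmem j x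
    have hne : b j - a j ≠ 0 := by have := h2.1.trans h2.2; linarith
    show ((e j x).2 : ℝ) = (p x.1 - a j)/(b j - a j)
    rw [h]; field_simp; ring
  -- fiber description
  have hSj : ∀ j (t : ℝ) (ht : t ∈ Set.Ioo (a j) (b j)),
      p ⁻¹' {t} ∩ U j
        = Subtype.val '' ((e j).symm '' ((Set.univ : Set N) ×ˢ {unitParam _ _ t ht})) := by
    intro j t ht
    ext x
    constructor
    · rintro ⟨hxt, hxU⟩
      have hx : p (⟨x, hxU⟩ : U j).1 = t := hxt
      refine ⟨(e j).symm (((e j) ⟨x, hxU⟩).1, unitParam _ _ t ht),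
        ⟨(((e j) ⟨x, hxU⟩).1, unitParam _ _ t ht), ⟨trivial, rfl⟩, rfl⟩, ?_⟩
      have hval : unitParam (a j) (b j) t ht = ((e j) ⟨x, hxU⟩).2 := by
        rw [hsnd j ⟨x, hxU⟩]
        exact Subtype.ext (by
          show (t - a j)/(b j - a j) = (p (⟨x, hxU⟩ : U j).1 - a j)/(b j - a j)
          rw [hx])
      have : (((e j) ⟨x, hxU⟩).1, unitParam (a j) (b j) t ht) = (e j) ⟨x, hxU⟩ := by
        rw [hval]
      rw [this, (e j).symm_apply_apply]
    · rintro ⟨y, ⟨⟨θ, s⟩, ⟨-, hs⟩, rfl⟩, rfl⟩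
      simp only [Set.mem_singleton_iff] at hs
      subst hs
      obtain ⟨z, hz1, hz2⟩ := hsec j θ t ht
      have : (e j).symm (θ, unitParam _ _ t ht) = z := by rw [← hz2, (e j).symm_apply_apply]
      rw [this]
      exact ⟨hz1, z.2⟩
  -- the goal
  apply Set.Subset.antisymm
  · intro x hx
    exact hpmem i ⟨x, hx⟩
  · intro x hx
    have ht : p x ∈ Set.Ioo (a i) (b i) := hx
    set t := p x with htdef
    -- the full fiber is compact
    have hScomp : IsCompact (p ⁻¹' {t}) := hproper {t} isCompact_singleton
    obtain ⟨j0, hj0⟩ : ∃ j, p ⁻¹' {t} ⊆ U j :=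
      hScomp.elim_directed_cover U hopen
        (by rw [hcover]; exact Set.subset_univ _) (hmono.directed_le)
    set j := max i j0 with hjdef
    have hj : p ⁻¹' {t} ⊆ U j := hj0.trans (hmono (le_max_right i j0))
    obtain ⟨z0, hz01, -⟩ := hsec i (Classical.arbitrary N) t ht
    have hz0S : z0.1 ∈ p ⁻¹' {t} := hz01
    have htj : t ∈ Set.Ioo (a j) (b j) := by
      have := hpmem j ⟨z0.1, hj hz0S⟩
      rwa [show p (⟨z0.1, hj hz0S⟩ : U j).1 = t from hz01] at this
    -- the fiber is connected
    have hSU : p ⁻¹' {t} = p ⁻¹' {t} ∩ U j := (Set.inter_eq_left.2 hj).symm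
    have hconn : IsPreconnected (p ⁻¹' {t}) := by
      rw [hSU, hSj j t htj]
      refine IsConnected.isPreconnected ?_
      refine IsConnected.image ?_ _ continuous_subtype_val.continuousOn
      refine IsConnected.image ?_ _ (e j).continuous_symm.continuousOn
      exact IsConnected.prod ⟨⟨Classical.arbitrary N, Set.mem_univ _⟩, isPreconnected_univ⟩
        isConnected_singleton
    -- the partial fiber is compact hence closed
    have hCcomp : IsCompact (p ⁻¹' {t} ∩ U i) := by
      rw [hSj i t ht]
      exact ((isCompact_univ.prod isCompact_singleton).image
        (e i).continuous_symm).image continuous_subtype_val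
    have hCclosed : IsClosed (p ⁻¹' {t} ∩ U i) := hCcomp.isClosed
    -- clopen argument
    by_contra hxU
    have hnon2 : (p ⁻¹' {t} ∩ (p ⁻¹' {t} ∩ U i)ᶜ).Nonempty := ⟨x, rfl, by
      simp only [Set.mem_compl_iff, Set.mem_inter_iff, not_and]
      intro _; exact hxU⟩
    have hnon1 : (p ⁻¹' {t} ∩ U i).Nonempty := ⟨z0.1, hz0S, z0.2⟩
    obtain ⟨y, hy⟩ := hconn (U i) (p ⁻¹' {t} ∩ U i)ᶜ (hopen i) hCclosed.isOpen_compl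
      (by intro w hw
          by_cases hwU : w ∈ U i
          · exact Or.inl hwU
          · exact Or.inr (by simp only [Set.mem_compl_iff, Set.mem_inter_iff, not_and]
                             intro _; exact hwU))
      hnon1 hnon2
    exact hy.2.2 ⟨hy.1, hy.2.1⟩


theorem tube_p_mem {N M : Type*} [TopologicalSpace N] [TopologicalSpace M]
    (U : ℕ → Set M) (e : ∀ i, (U i) ≃ₜ N × Set.Ioo (0:ℝ) 1) (p : M → ℝ)
    (a b : ℕ → ℝ) (hab : ∀ i, a i < b i)
    (hfib : ∀ i (x : U i), p x.1 = a i + (b i - a i) * ((e i x).2 : ℝ))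
    (i : ℕ) (x : U i) : p x.1 ∈ Set.Ioo (a i) (b i) := by
  have h := hfib i x
  have hs1 : (0:ℝ) < ((e i x).2 : ℝ) := ((e i x).2).2.1
  have hs2 : ((e i x).2 : ℝ) < 1 := ((e i x).2).2.2
  have hab' := hab i
  constructor <;> nlinarith

theorem tube_sec_exists {N M : Type*} [TopologicalSpace N] [TopologicalSpace M]
    (U : ℕ → Set M) (e : ∀ i, (U i) ≃ₜ N × Set.Ioo (0:ℝ) 1) (p : M → ℝ)
    (a b : ℕ → ℝ)
    (hfib : ∀ i (x : U i), p x.1 = a i + (b i - a i) * ((e i x).2 : ℝ))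
    (i : ℕ) (θ : N) (t : ℝ) (ht : t ∈ Set.Ioo (a i) (b i)) :
    ∃ x : U i, p x.1 = t := by
  refine ⟨(e i).symm (θ, unitParam _ _ t ht), ?_⟩
  have h := hfib i ((e i).symm (θ, unitParam _ _ t ht))
  rw [(e i).apply_symm_apply] at h
  have hne : b i - a i ≠ 0 := by have := ht.1.trans ht.2; linarith
  rw [h]
  show a i + (b i - a i) * ((t - a i)/(b i - a i)) = t
  field_simp
  ring

/-- (docstring omitted here) -/
theorem stmt_16 (n : ℕ) (hn : 2 ≤ n)
    (Γ : Subgroup (Matrix.orthogonalGroup (Fin n) ℝ)) [Finite Γ]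
    (hfree : ∀ γ ∈ Γ, γ ≠ 1 → ∀ v : EuclideanSpace ℝ (Fin n), ‖v‖ = 1 →
      Matrix.toEuclideanLin (γ : Matrix (Fin n) (Fin n) ℝ) v ≠ v)
    (M : Type*) [TopologicalSpace M] [T2Space M] [ConnectedSpace M] [NoncompactSpace M]
    (U : ℕ → Set M)
    (hopen : ∀ i, IsOpen (U i))
    (hnested : ∀ i, closure (U i) ⊆ U (i + 1))
    (hcover : ⋃ i, U i = Set.univ)
    (e : ∀ i, (U i) ≃ₜ (sphereQuot n Γ × Set.Ioo (0:ℝ) 1))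
    -- compatibility of the gluings: `M` fibers as a tube over `ℝ`
    (p : M → ℝ) (hp : Continuous p) (hproper : ∀ K : Set ℝ, IsCompact K → IsCompact (p ⁻¹' K))
    (hfib : ∀ i, ∃ a b : ℝ, a < b ∧ ∀ x : U i, p x = a + (b - a) * ((e i x).2 : ℝ)) :
    Nonempty (M ≃ₜ (sphereQuot n Γ × ℝ)) := by
  classical
  -- topological properties of the cross-section
  have hsetEq : {v : EuclideanSpace ℝ (Fin n) | ‖v‖ = 1}
      = Metric.sphere (0 : EuclideanSpace ℝ (Fin n)) 1 := by
    ext v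
    simp [mem_sphere_iff_norm]
  have hcompS : IsCompact {v : EuclideanSpace ℝ (Fin n) | ‖v‖ = 1} := by
    rw [hsetEq]; exact isCompact_sphere 0 1
  have hconnS : IsConnected {v : EuclideanSpace ℝ (Fin n) | ‖v‖ = 1} := by
    rw [hsetEq]
    refine isConnected_sphere ?_ 0 zero_le_one
    rw [← Module.finrank_eq_rank, finrank_euclideanSpace_fin]
    exact_mod_cast (by omega : 1 < n)
  haveI : CompactSpace (sphereN n) := isCompact_iff_compactSpace.mp hcompS
  haveI : ConnectedSpace (sphereN n) := isConnected_iff_connectedSpace.mp hconnS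
  haveI : Nonempty (sphereN n) := ⟨⟨EuclideanSpace.single ⟨0, by omega⟩ (1:ℝ), by
    rw [EuclideanSpace.norm_single]; norm_num⟩⟩
  have hquniv : (Set.univ : Set (sphereQuot n Γ)) = Quot.mk _ '' Set.univ := by
    ext q
    simp only [Set.mem_univ, true_iff, Set.image_univ, Set.mem_range]
    exact Quot.exists_rep q
  haveI : Nonempty (sphereQuot n Γ) := ⟨Quot.mk _ (Classical.arbitrary _)⟩
  haveI : CompactSpace (sphereQuot n Γ) := by
    constructor
    rw [hquniv]
    exact isCompact_univ.image continuous_quot_mk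
  haveI : ConnectedSpace (sphereQuot n Γ) := by
    refine { toNonempty := inferInstance, isPreconnected_univ := ?_ }
    rw [hquniv]
    exact isPreconnected_univ.image _ continuous_quot_mk.continuousOn
  haveI : T2Space (sphereQuot n Γ) := by
    refine T2Space.of_injective_continuous
      (f := fun θ : sphereQuot n Γ =>
        (((e 0).symm (θ, ⟨1/2, by norm_num⟩)) : U 0).1) ?_ ?_
    · intro θ1 θ2 h
      have h2 := (e 0).symm.injective (Subtype.ext h)
      exact congrArg Prod.fst h2
    · exact continuous_subtype_val.comp
        ((e 0).continuous_symm.comp (continuous_id.prodMk continuous_const))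
  -- choose the interval data
  choose a b hab' using hfib
  have hab : ∀ i, a i < b i := fun i => (hab' i).1
  have hfib' : ∀ i (x : U i), p x.1 = a i + (b i - a i) * ((e i x).2 : ℝ) :=
    fun i => (hab' i).2
  have hmonoU : Monotone U := monotone_nat_of_le_succ (fun i => subset_closure.trans (hnested i))
  have hU' : ∀ i, U i = p ⁻¹' Set.Ioo (a i) (b i) :=
    neck_eq U hopen hmonoU hcover e p hproper a b hab hfib'
  have hpmem : ∀ i (x : U i), p x.1 ∈ Set.Ioo (a i) (b i) := tube_p_mem U e p a b hab hfib'
  have hsecx : ∀ i (t : ℝ), t ∈ Set.Ioo (a i) (b i) → ∃ x : U i, p x.1 = t :=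
    fun i t ht => tube_sec_exists U e p a b hfib' i (Classical.arbitrary _) t ht
  have hIoo : ∀ i, Set.Ioo (a i) (b i) ⊆ Set.Ioo (a (i+1)) (b (i+1)) := by
    intro i t ht
    obtain ⟨x, hx⟩ := hsecx i t ht
    have hmem : x.1 ∈ U (i+1) := hmonoU (Nat.le_succ i) x.2
    have h2 := hpmem (i+1) ⟨x.1, hmem⟩
    rwa [show p (⟨x.1, hmem⟩ : U (i+1)).1 = t from hx] at h2
  have hIooLE : ∀ {i j}, i ≤ j → Set.Ioo (a i) (b i) ⊆ Set.Ioo (a j) (b j) := by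
    intro i j hij
    induction j, hij using Nat.le_induction with
    | base => exact subset_rfl
    | succ j hij ih => exact ih.trans (hIoo j)
  have hba : ∀ {i j}, i ≤ j → a j ≤ a i ∧ b i ≤ b j :=
    fun {i j} hij => (Set.Ioo_subset_Ioo_iff (hab i)).1 (hIooLE hij)
  -- the clamping intervals
  set eps : ℕ → ℝ := fun j => min ((b j - a j)/4) (1/((j:ℝ)+1)) with hepsdef
  have heps_pos : ∀ j, 0 < eps j := fun j => lt_min (by linarith [hab j]) (by positivity)
  have heps_le1 : ∀ j, eps j ≤ (b j - a j)/4 := fun j => min_le_left _ _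
  have heps_le2 : ∀ j, eps j ≤ 1/((j:ℝ)+1) := fun j => min_le_right _ _
  set l : ℕ → ℝ := fun i => (Finset.range (i+1)).inf'
      ⟨0, Finset.mem_range.2 (Nat.succ_pos i)⟩ (fun j => a j + eps j) with hldef
  set r : ℕ → ℝ := fun i => (Finset.range (i+1)).sup'
      ⟨0, Finset.mem_range.2 (Nat.succ_pos i)⟩ (fun j => b j - eps j) with hrdef
  have hl_le : ∀ {i j}, j ≤ i → l i ≤ a j + eps j := by
    intro i j h
    simp only [hldef]
    exact Finset.inf'_le _ (Finset.mem_range.2 (Nat.lt_succ_of_le h))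
  have hr_ge : ∀ {i j}, j ≤ i → b j - eps j ≤ r i := by
    intro i j h
    simp only [hrdef]
    exact Finset.le_sup' (fun j => b j - eps j) (Finset.mem_range.2 (Nat.lt_succ_of_le h))
  have hlmono : Antitone l := by
    intro i j hij
    simp only [hldef]
    apply Finset.le_inf'
    intro k hk
    have : l j ≤ a k + eps k := hl_le (le_trans (Nat.lt_succ_iff.1 (Finset.mem_range.1 hk)) hij)
    simpa only [hldef] using this
  have hrmono : Monotone r := by
    intro i j hij
    simp only [hrdef]
    apply Finset.sup'_le
    intro k hk
    have : b k - eps k ≤ r j := hr_ge (le_trans (Nat.lt_succ_iff.1 (Finset.mem_range.1 hk)) hij)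
    simpa only [hrdef] using this
  have hal : ∀ i, a i < l i := by
    intro i
    simp only [hldef]
    apply (Finset.lt_inf'_iff (H := _)).2
    intro k hk
    have hki : k ≤ i := Nat.lt_succ_iff.1 (Finset.mem_range.1 hk)
    have h1 := (hba hki).1
    have h2 := heps_pos k
    linarith
  have hrb : ∀ i, r i < b i := by
    intro i
    simp only [hrdef]
    apply (Finset.sup'_lt_iff (H := _)).2
    intro k hk
    have hki : k ≤ i := Nat.lt_succ_iff.1 (Finset.mem_range.1 hk)
    have h1 := (hba hki).2
    have h2 := heps_pos k
    linarith
  have hlr : ∀ i, l i < r i := by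
    intro i
    have h1 : l i ≤ a i + eps i := hl_le (le_refl i)
    have h2 : b i - eps i ≤ r i := hr_ge (le_refl i)
    have h3 := heps_le1 i
    have h4 := hab i
    linarith
  have hIcc : ∀ i, Set.Icc (l i) (r i) ⊆ Set.Ioo (a i) (b i) :=
    fun i t ht => ⟨lt_of_lt_of_le (hal i) ht.1, lt_of_le_of_lt ht.2 (hrb i)⟩
  -- the covering property
  have hcov : ∀ x : M, ∃ i, p x ∈ Set.Ioo (l i) (r i) := by
    intro x
    obtain ⟨i, hiU⟩ := Set.mem_iUnion.1
      (show x ∈ ⋃ i, U i by rw [hcover]; exact Set.mem_univ x)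
    have hpx := hpmem i ⟨x, hiU⟩
    have hpx1 : a i < p x := hpx.1
    have hpx2 : p x < b i := hpx.2
    obtain ⟨m0, hm0⟩ := exists_nat_one_div_lt
      (show (0:ℝ) < min (p x - a i) (b i - p x) from
        lt_min (by linarith) (by linarith))
    have hmi : i ≤ max m0 i := le_max_right m0 i
    have hcast : ((m0:ℝ)+1) ≤ (((max m0 i : ℕ):ℝ)+1) := by
      have : (m0:ℝ) ≤ ((max m0 i : ℕ):ℝ) := Nat.cast_le.2 (le_max_left m0 i)
      linarith
    have hm0m : (1:ℝ)/(((max m0 i : ℕ):ℝ)+1) ≤ 1/((m0:ℝ)+1) :=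
      one_div_le_one_div_of_le (by positivity) hcast
    have hkey : (1:ℝ)/(((max m0 i : ℕ):ℝ)+1) < min (p x - a i) (b i - p x) :=
      lt_of_le_of_lt hm0m hm0
    refine ⟨max m0 i, ?_, ?_⟩
    · have h1 : l (max m0 i) ≤ a (max m0 i) + eps (max m0 i) := hl_le (le_refl _)
      have h2 : a (max m0 i) ≤ a i := (hba hmi).1
      have h3 : eps (max m0 i) ≤ 1/(((max m0 i : ℕ):ℝ)+1) := heps_le2 _
      have h4 : (1:ℝ)/(((max m0 i : ℕ):ℝ)+1) < p x - a i :=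
        lt_of_lt_of_le hkey (min_le_left _ _)
      linarith
    · have h1 : b (max m0 i) - eps (max m0 i) ≤ r (max m0 i) := hr_ge (le_refl _)
      have h2 : b i ≤ b (max m0 i) := (hba hmi).2
      have h3 : eps (max m0 i) ≤ 1/(((max m0 i : ℕ):ℝ)+1) := heps_le2 _
      have h4 : (1:ℝ)/(((max m0 i : ℕ):ℝ)+1) < b i - p x :=
        lt_of_lt_of_le hkey (min_le_right _ _)
      linarith
  exact TubeData.exists_homeo
    { U := U, e := e, p := p, hp := hp, a := a, b := b, l := l, r := r,
      hU := hU', hfib := hfib', hIoo := hIoo, hlr := hlr, hIcc := hIcc,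
      hlmono := hlmono, hrmono := hrmono } hcov hproper
end
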